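/- The Wong–Zakai correction term for g(ρ) = -(1/2)(I₃ + [ρ]ₓ + ρρᵀ) with diagonal covariance matrix Q² is W(ρ) := the vector with i-th entry Σ_{k=1}^{3}Σ_{j=1}^{3} (Q²ⱼⱼ/2)·g_{kj}(ρ)·∂g_{ij}(ρ)/∂ρ_k, and it equals (1/4)(I₃ + [ρ]ₓ + ρρᵀ)Q²ρ. -/

import Mathlib

open Matrix

noncomputable section

/-- The skew-symmetric matrix `[v]ₓ` of a vector `v ∈ ℝ³`. -/
def skew (v : Fin 3 → ℝ) : Matrix (Fin 3) (Fin 3) ℝ :=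
  !![0, -v 2, v 1; v 2, 0, -v 0; -v 1, v 0, 0]

/-- `g(ρ) = -(1/2)(I₃ + [ρ]ₓ + ρρᵀ)`. -/
def gmap (ρ : Fin 3 → ℝ) : Matrix (Fin 3) (Fin 3) ℝ :=
  (-(1 / 2) : ℝ) • ((1 : Matrix (Fin 3) (Fin 3) ℝ) + skew ρ + vecMulVec ρ ρ)

lemma dproj (ρ : Fin 3 → ℝ) (m : Fin 3) : DifferentiableAt ℝ (fun x : Fin 3 → ℝ => x m) ρ :=
  (ContinuousLinearMap.proj m : (Fin 3 → ℝ) →L[ℝ] ℝ).differentiableAt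

lemma fproj (ρ : Fin 3 → ℝ) (m : Fin 3) (v : Fin 3 → ℝ) :
    fderiv ℝ (fun x : Fin 3 → ℝ => x m) ρ v = v m := by
  have := (ContinuousLinearMap.proj (R := ℝ) (φ := fun _ : Fin 3 => ℝ) m).fderiv (x := ρ)
  rw [show (fun x : Fin 3 → ℝ => x m) = ⇑(ContinuousLinearMap.proj (R := ℝ) (φ := fun _ : Fin 3 => ℝ) m) from rfl, this]
  rfl

lemma d1 (ρ v : Fin 3 → ℝ) (m : Fin 3) :
    fderiv ℝ (fun y : Fin 3 → ℝ => 2⁻¹ * (1 + y m * y m)) ρ v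
      = 2⁻¹ * (v m * ρ m + ρ m * v m) := by
  have hm := dproj ρ m
  rw [fderiv_const_mul (by fun_prop)]
  simp only [ContinuousLinearMap.smul_apply, smul_eq_mul]
  congr 1
  rw [fderiv_fun_add (g := fun y : Fin 3 → ℝ => y m * y m) (differentiableAt_const _) (hm.mul hm), fderiv_fun_mul hm hm]
  simp [fproj, mul_comm]

lemma d2 (ρ v : Fin 3 → ℝ) (a m n : Fin 3) :
    fderiv ℝ (fun y : Fin 3 → ℝ => 2⁻¹ * (-y a + y m * y n)) ρ v
      = 2⁻¹ * (-v a + v m * ρ n + ρ m * v n) := by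
  have hm := dproj ρ m; have hn := dproj ρ n; have ha := dproj ρ a
  rw [fderiv_const_mul (by fun_prop)]
  simp only [ContinuousLinearMap.smul_apply, smul_eq_mul]
  congr 1
  rw [fderiv_fun_add (f := fun y : Fin 3 → ℝ => -y a) (g := fun y : Fin 3 → ℝ => y m * y n) (ha.neg) (hm.mul hn), fderiv_fun_mul hm hn, fderiv_fun_neg]
  simp [fproj, mul_comm]
  ring

lemma d3 (ρ v : Fin 3 → ℝ) (a m n : Fin 3) :
    fderiv ℝ (fun y : Fin 3 → ℝ => 2⁻¹ * (y a + y m * y n)) ρ v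
      = 2⁻¹ * (v a + v m * ρ n + ρ m * v n) := by
  have hm := dproj ρ m; have hn := dproj ρ n; have ha := dproj ρ a
  rw [fderiv_const_mul (by fun_prop)]
  simp only [ContinuousLinearMap.smul_apply, smul_eq_mul]
  congr 1
  rw [fderiv_fun_add (g := fun y : Fin 3 → ℝ => y m * y n) ha (hm.mul hn), fderiv_fun_mul hm hn]
  simp [fproj, mul_comm]
  ring

lemma fderiv_gmap (ρ : Fin 3 → ℝ) (i j k : Fin 3) :
    fderiv ℝ (fun x : Fin 3 → ℝ => gmap x i j) ρ (Pi.single k 1) =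
      -(1/2) * (skew (Pi.single k 1) i j
        + (Pi.single k 1 : Fin 3 → ℝ) i * ρ j + ρ i * (Pi.single k 1 : Fin 3 → ℝ) j) := by
  fin_cases i <;> fin_cases j <;>
    simp [gmap, skew, vecMulVec_apply, Matrix.one_apply] <;>
    (first | rw [d1] | rw [d2] | rw [d3]) <;> ring

/-- The Wong–Zakai correction term: for diagonal covariance `Q²` with diagonal
entries `q j ≥ 0`, the vector with `i`-th entry
`Σₖ Σⱼ (Q²ⱼⱼ/2) g_{kj}(ρ) ∂g_{ij}(ρ)/∂ρₖ` equals `(1/4)(I₃ + [ρ]ₓ + ρρᵀ) Q² ρ`. -/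
theorem wong_zakai_correction (ρ : Fin 3 → ℝ) (q : Fin 3 → ℝ) (hq : ∀ j, 0 ≤ q j)
    (i : Fin 3) :
    (∑ k : Fin 3, ∑ j : Fin 3,
        q j / 2 * gmap ρ k j *
          fderiv ℝ (fun x : Fin 3 → ℝ => gmap x i j) ρ (Pi.single k 1)) =
      ((1 / 4 : ℝ) •
        (((1 : Matrix (Fin 3) (Fin 3) ℝ) + skew ρ + vecMulVec ρ ρ) *
          Matrix.diagonal q).mulVec ρ) i := by
  simp only [fderiv_gmap]
  fin_cases i <;>
    simp [Fin.sum_univ_three, gmap, skew, vecMulVec_apply, Matrix.one_apply, mulVec,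
      dotProduct, Matrix.mul_apply, Matrix.diagonal, Pi.single_apply] <;> ring
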